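/- Let -1 < β < 0 and define φ(z) = i(z₁ + z₂) - (1/4)(z₁⁴ + 2β z₁²z₂² + z₂⁴) on ℂ², corresponding to x = (1,1). Let ξ₀ = (1/2)(3-β)^{1/2}(1+β)^{-1/6}(1-β)^{-1/3}(1,-1) and η₀ = (1/2)((1+β)/(1-β))^{1/3}(1,1). Then z₀ = ξ₀ + iη₀ is a critical point of φ with φ(z₀) = -(3/4)((1+β)/(1-β))^{1/3} + i·Im φ(z₀) for some real imaginary part, i.e. Re φ(z₀) = -(3/4)((1+β)/(1-β))^{1/3}. -/

import Mathlib

open Complex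

set_option maxHeartbeats 1600000 in
theorem stmt18 (β : ℝ) (hβ1 : -1 < β) (hβ2 : β < 0) (ξ01 η0 : ℝ) (z1 z2 : ℂ)
    (hξ0 : ξ01 = 1 / 2 * (3 - β) ^ ((1 : ℝ) / 2) * (1 + β) ^ (-(1 : ℝ) / 6)
        * (1 - β) ^ (-(1 : ℝ) / 3))
    (hη0 : η0 = 1 / 2 * ((1 + β) / (1 - β)) ^ ((1 : ℝ) / 3))
    (hz1 : z1 = (ξ01 : ℂ) + (η0 : ℂ) * I)
    (hz2 : z2 = -(ξ01 : ℂ) + (η0 : ℂ) * I) :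
    I - z1 ^ 3 - (β : ℂ) * z1 * z2 ^ 2 = 0
    ∧ I - (β : ℂ) * z1 ^ 2 * z2 - z2 ^ 3 = 0
    ∧ (I * (z1 + z2)
        - 1 / 4 * (z1 ^ 4 + 2 * (β : ℂ) * z1 ^ 2 * z2 ^ 2 + z2 ^ 4)).re
        = -(3 / 4) * ((1 + β) / (1 - β)) ^ ((1 : ℝ) / 3) := by
  have h1 : (0:ℝ) < 1 + β := by linarith
  have h2 : (0:ℝ) < 1 - β := by linarith
  have h3 : (0:ℝ) < 3 - β := by linarith
  set p := (1+β) ^ ((1:ℝ)/6) with hpdef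
  set q := (1-β) ^ ((1:ℝ)/3) with hqdef
  set s := (3-β) ^ ((1:ℝ)/2) with hsdef
  have hp0 : 0 < p := Real.rpow_pos_of_pos h1 _
  have hq0 : 0 < q := Real.rpow_pos_of_pos h2 _
  have hs0 : 0 < s := Real.rpow_pos_of_pos h3 _
  have hp : p ^ 6 = 1 + β := by
    rw [hpdef, ← Real.rpow_natCast ((1+β) ^ ((1:ℝ)/6)) 6, ← Real.rpow_mul h1.le]
    norm_num
  have hq : q ^ 3 = 1 - β := by
    rw [hqdef, ← Real.rpow_natCast ((1-β) ^ ((1:ℝ)/3)) 3, ← Real.rpow_mul h2.le]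
    norm_num
  have hs : s ^ 2 = 3 - β := by
    rw [hsdef, ← Real.rpow_natCast ((3-β) ^ ((1:ℝ)/2)) 2, ← Real.rpow_mul h3.le]
    norm_num
  have hcube : (1+β) ^ ((1:ℝ)/3) = p ^ 2 := by
    rw [hpdef, ← Real.rpow_natCast ((1+β) ^ ((1:ℝ)/6)) 2, ← Real.rpow_mul h1.le]
    norm_num
  have hη' : η0 = p ^ 2 / (2 * q) := by
    rw [hη0, Real.div_rpow h1.le h2.le, hcube, ← hqdef]
    ring
  have hξ' : ξ01 = s / (2 * p * q) := by
    rw [hξ0, show (-(1:ℝ)/6) = -(1/6) by norm_num, show (-(1:ℝ)/3) = -(1/3) by norm_num,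
      Real.rpow_neg h1.le, Real.rpow_neg h2.le]
    field_simp
    rw [hpdef, hqdef]
  have hp0c : (p:ℂ) ≠ 0 := Complex.ofReal_ne_zero.2 hp0.ne'
  have hq0c : (q:ℂ) ≠ 0 := Complex.ofReal_ne_zero.2 hq0.ne'
  have hpc : (p:ℂ) ^ 6 = 1 + (β:ℂ) := by exact_mod_cast congrArg (Complex.ofReal) hp
  have hqc : (q:ℂ) ^ 3 = 1 - (β:ℂ) := by exact_mod_cast congrArg (Complex.ofReal) hq
  have hsc : (s:ℂ) ^ 2 = 3 - (β:ℂ) := by exact_mod_cast congrArg (Complex.ofReal) hs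
  have h2z1 : 2 * (p:ℂ) * (q:ℂ) * z1 = (s:ℂ) + (p:ℂ)^3 * I := by
    rw [hz1, hξ', hη']
    push_cast
    field_simp
  have h2z2 : 2 * (p:ℂ) * (q:ℂ) * z2 = -(s:ℂ) + (p:ℂ)^3 * I := by
    rw [hz2, hξ', hη']
    push_cast
    field_simp
  have hM : (2 * (p:ℂ) * (q:ℂ)) ≠ 0 := mul_ne_zero (mul_ne_zero two_ne_zero hp0c) hq0c
  have key1 : (2 * (p:ℂ) * (q:ℂ))^3 * (I - z1 ^ 3 - (β : ℂ) * z1 * z2 ^ 2) = 0 := by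
    linear_combination (norm := ring1) ((-4) * z1 ^ 2 * (p:ℂ) ^ 2 * (q:ℂ) ^ 2 + (-2) * z1 * (p:ℂ) ^ 4 * (q:ℂ) * I + (-2) * z1 * (p:ℂ) * (q:ℂ) * (s:ℂ) + (-4) * z2 ^ 2 * (p:ℂ) ^ 2 * (q:ℂ) ^ 2 * (β:ℂ) + (-1) * (p:ℂ) ^ 6 * I ^ 2 + (-2) * (p:ℂ) ^ 3 * (s:ℂ) * I + (-1) * (s:ℂ) ^ 2) * h2z1
      + ((-2) * z2 * (p:ℂ) ^ 4 * (q:ℂ) * I * (β:ℂ) + (-2) * z2 * (p:ℂ) * (q:ℂ) * (s:ℂ) * (β:ℂ) + (-1) * (p:ℂ) ^ 6 * I ^ 2 * (β:ℂ) + (1) * (s:ℂ) ^ 2 * (β:ℂ)) * h2z2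
      + ((-1) * (p:ℂ) ^ 3 * I ^ 3 * (β:ℂ) + (-1) * (p:ℂ) ^ 3 * I ^ 3 + (1) * (s:ℂ) * I ^ 2 * (β:ℂ) + (-3) * (s:ℂ) * I ^ 2) * hpc
      + ((8) * (p:ℂ) ^ 3 * I) * hqc
      + ((1) * (p:ℂ) ^ 3 * I * (β:ℂ) + (-3) * (p:ℂ) ^ 3 * I + (-1) * (s:ℂ) * (β:ℂ) + (-1) * (s:ℂ)) * hsc
      + ((-1) * (p:ℂ) ^ 3 * I * (β:ℂ) ^ 2 + (-2) * (p:ℂ) ^ 3 * I * (β:ℂ) + (-1) * (p:ℂ) ^ 3 * I + (1) * (s:ℂ) * (β:ℂ) ^ 2 + (-2) * (s:ℂ) * (β:ℂ) + (-3) * (s:ℂ)) * Complex.I_sq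
  have key2 : (2 * (p:ℂ) * (q:ℂ))^3 * (I - (β : ℂ) * z1 ^ 2 * z2 - z2 ^ 3) = 0 := by
    linear_combination (norm := ring1) ((-4) * z1 * z2 * (p:ℂ) ^ 2 * (q:ℂ) ^ 2 * (β:ℂ) + (-2) * z2 * (p:ℂ) ^ 4 * (q:ℂ) * I * (β:ℂ) + (-2) * z2 * (p:ℂ) * (q:ℂ) * (s:ℂ) * (β:ℂ)) * h2z1
      + ((-4) * z2 ^ 2 * (p:ℂ) ^ 2 * (q:ℂ) ^ 2 + (-2) * z2 * (p:ℂ) ^ 4 * (q:ℂ) * I + (2) * z2 * (p:ℂ) * (q:ℂ) * (s:ℂ) + (-1) * (p:ℂ) ^ 6 * I ^ 2 * (β:ℂ) + (-1) * (p:ℂ) ^ 6 * I ^ 2 + (-2) * (p:ℂ) ^ 3 * (s:ℂ) * I * (β:ℂ) + (2) * (p:ℂ) ^ 3 * (s:ℂ) * I + (-1) * (s:ℂ) ^ 2 * (β:ℂ) + (-1) * (s:ℂ) ^ 2) * h2z2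
      + ((-1) * (p:ℂ) ^ 3 * I ^ 3 * (β:ℂ) + (-1) * (p:ℂ) ^ 3 * I ^ 3 + (-1) * (s:ℂ) * I ^ 2 * (β:ℂ) + (3) * (s:ℂ) * I ^ 2) * hpc
      + ((8) * (p:ℂ) ^ 3 * I) * hqc
      + ((1) * (p:ℂ) ^ 3 * I * (β:ℂ) + (-3) * (p:ℂ) ^ 3 * I + (1) * (s:ℂ) * (β:ℂ) + (1) * (s:ℂ)) * hsc
      + ((-1) * (p:ℂ) ^ 3 * I * (β:ℂ) ^ 2 + (-2) * (p:ℂ) ^ 3 * I * (β:ℂ) + (-1) * (p:ℂ) ^ 3 * I + (-1) * (s:ℂ) * (β:ℂ) ^ 2 + (2) * (s:ℂ) * (β:ℂ) + (3) * (s:ℂ)) * Complex.I_sq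
  have key3 : (2 * (p:ℂ) * (q:ℂ))^4 * ((q:ℂ) * (I * (z1 + z2)
      - 1 / 4 * (z1 ^ 4 + 2 * (β : ℂ) * z1 ^ 2 * z2 ^ 2 + z2 ^ 4)) + 3/4 * (p:ℂ)^2) = 0 := by
    linear_combination (norm := ring1) ((-2) * z1 ^ 3 * (p:ℂ) ^ 3 * (q:ℂ) ^ 4 + (-1) * z1 ^ 2 * (p:ℂ) ^ 5 * (q:ℂ) ^ 3 * I + (-1) * z1 ^ 2 * (p:ℂ) ^ 2 * (q:ℂ) ^ 3 * (s:ℂ) + (-4) * z1 * z2 ^ 2 * (p:ℂ) ^ 3 * (q:ℂ) ^ 4 * (β:ℂ) + (-1/2) * z1 * (p:ℂ) ^ 7 * (q:ℂ) ^ 2 * I ^ 2 + (-1) * z1 * (p:ℂ) ^ 4 * (q:ℂ) ^ 2 * (s:ℂ) * I + (-1/2) * z1 * (p:ℂ) * (q:ℂ) ^ 2 * (s:ℂ) ^ 2 + (-2) * z2 ^ 2 * (p:ℂ) ^ 5 * (q:ℂ) ^ 3 * I * (β:ℂ) + (-2) * z2 ^ 2 * (p:ℂ) ^ 2 * (q:ℂ)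 ^ 3 * (s:ℂ) * (β:ℂ) + (-1/4) * (p:ℂ) ^ 9 * (q:ℂ) * I ^ 3 + (-3/4) * (p:ℂ) ^ 6 * (q:ℂ) * (s:ℂ) * I ^ 2 + (8) * (p:ℂ) ^ 3 * (q:ℂ) ^ 4 * I + (-3/4) * (p:ℂ) ^ 3 * (q:ℂ) * (s:ℂ) ^ 2 * I + (-1/4) * (q:ℂ) * (s:ℂ) ^ 3) * h2z1
      + ((-2) * z2 ^ 3 * (p:ℂ) ^ 3 * (q:ℂ) ^ 4 + (-1) * z2 ^ 2 * (p:ℂ) ^ 5 * (q:ℂ) ^ 3 * I + (1) * z2 ^ 2 * (p:ℂ) ^ 2 * (q:ℂ) ^ 3 * (s:ℂ) + (-1) * z2 * (p:ℂ) ^ 7 * (q:ℂ) ^ 2 * I ^ 2 * (β:ℂ) + (-1/2) * z2 * (p:ℂ) ^ 7 * (q:ℂ) ^ 2 * I ^ 2 + (-2) * z2 * (p:ℂ) ^ 4 * (q:ℂ) ^ 2 * (s:ℂ) * I * (β:ℂ) + (1) * z2 * (p:ℂ) ^ 4 * (q:ℂ) ^ 2 * (s:ℂ) * I + (-1) * z2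 * (p:ℂ) * (q:ℂ) ^ 2 * (s:ℂ) ^ 2 * (β:ℂ) + (-1/2) * z2 * (p:ℂ) * (q:ℂ) ^ 2 * (s:ℂ) ^ 2 + (-1/2) * (p:ℂ) ^ 9 * (q:ℂ) * I ^ 3 * (β:ℂ) + (-1/4) * (p:ℂ) ^ 9 * (q:ℂ) * I ^ 3 + (-1/2) * (p:ℂ) ^ 6 * (q:ℂ) * (s:ℂ) * I ^ 2 * (β:ℂ) + (3/4) * (p:ℂ) ^ 6 * (q:ℂ) * (s:ℂ) * I ^ 2 + (8) * (p:ℂ) ^ 3 * (q:ℂ) ^ 4 * I + (1/2) * (p:ℂ) ^ 3 * (q:ℂ) * (s:ℂ) ^ 2 * I * (β:ℂ) + (-3/4) * (p:ℂ) ^ 3 * (q:ℂ) * (s:ℂ) ^ 2 * I + (1/2) * (q:ℂ) * (s:ℂ) ^ 3 * (β:ℂ) + (1/4) * (q:ℂ) * (s:ℂ) ^ 3) * h2z2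
      + ((-1/2) * (p:ℂ) ^ 6 * (q:ℂ) * I ^ 4 * (β:ℂ) + (-1/2) * (p:ℂ) ^ 6 * (q:ℂ) * I ^ 4 + (16) * (q:ℂ) ^ 4 * I ^ 2 + (12) * (q:ℂ) ^ 4 + (1) * (q:ℂ) * (s:ℂ) ^ 2 * I ^ 2 * (β:ℂ) + (-3) * (q:ℂ) * (s:ℂ) ^ 2 * I ^ 2 + (-1/2) * (q:ℂ) * I ^ 4 * (β:ℂ) ^ 2 + (-1) * (q:ℂ) * I ^ 4 * (β:ℂ) + (-1/2) * (q:ℂ) * I ^ 4) * hpc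
      + ((16) * (q:ℂ) * I ^ 2 * (β:ℂ) + (16) * (q:ℂ) * I ^ 2 + (12) * (q:ℂ) * (β:ℂ) + (12) * (q:ℂ)) * hqc
      + ((-1/2) * (q:ℂ) * (s:ℂ) ^ 2 * (β:ℂ) + (-1/2) * (q:ℂ) * (s:ℂ) ^ 2 + (1) * (q:ℂ) * I ^ 2 * (β:ℂ) ^ 2 + (-2) * (q:ℂ) * I ^ 2 * (β:ℂ) + (-3) * (q:ℂ) * I ^ 2 + (1/2) * (q:ℂ) * (β:ℂ) ^ 2 + (-1) * (q:ℂ) * (β:ℂ) + (-3/2) * (q:ℂ)) * hsc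
      + ((-1/2) * (q:ℂ) * I ^ 2 * (β:ℂ) ^ 3 + (-3/2) * (q:ℂ) * I ^ 2 * (β:ℂ) ^ 2 + (-3/2) * (q:ℂ) * I ^ 2 * (β:ℂ) + (-1/2) * (q:ℂ) * I ^ 2 + (-1/2) * (q:ℂ) * (β:ℂ) ^ 3 + (-19/2) * (q:ℂ) * (β:ℂ) ^ 2 + (-3/2) * (q:ℂ) * (β:ℂ) + (15/2) * (q:ℂ)) * Complex.I_sq
  refine ⟨?_, ?_, ?_⟩
  · exact (mul_eq_zero.1 key1).resolve_left (pow_ne_zero _ hM)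
  · exact (mul_eq_zero.1 key2).resolve_left (pow_ne_zero _ hM)
  · have e3 := (mul_eq_zero.1 key3).resolve_left (pow_ne_zero _ hM)
    have hφ : I * (z1 + z2)
        - 1 / 4 * (z1 ^ 4 + 2 * (β : ℂ) * z1 ^ 2 * z2 ^ 2 + z2 ^ 4)
        = ((-(3/4) * p^2 / q : ℝ) : ℂ) := by
      push_cast
      rw [eq_div_iff hq0c]
      linear_combination e3
    rw [hφ, Complex.ofReal_re, Real.div_rpow h1.le h2.le, hcube, ← hqdef]
    ring
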